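/- (Conservation laws for the Curie–Weiss model.) For every x ∈ ℝ and t ≥ 0, the Gibbs averages of the magnetization satisfy lim_{N→∞} ( ⟨m_N⁴⟩_{N,(x,t)} − ⟨m_N²⟩²_{N,(x,t)} ) = 0 and lim_{N→∞} ( ⟨m_N³⟩_{N,(x,t)} − 3 ⟨m_N⟩_{N,(x,t)} ⟨m_N²⟩_{N,(x,t)} + 2 ⟨m_N⟩³_{N,(x,t)} ) = 0 (the Ghirlanda–Guerra and first Aizenman–Contucci relations for the Curie–Weiss model). -/

import Mathlib

open Real Filter Topology

/-- The Curie–Weiss magnetization `m_N(σ) = (1/N) ∑ᵢ σᵢ`. -/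
noncomputable def cwM (N : ℕ) (σ : Fin N → ({-1, 1} : Finset ℝ)) : ℝ :=
  (∑ i, (σ i : ℝ)) / N

/-- The Curie–Weiss Boltzmann weight `B_N(σ; x, t) = exp(N t m_N(σ)²/2 + N x m_N(σ))`. -/
noncomputable def cwB (N : ℕ) (x t : ℝ) (σ : Fin N → ({-1, 1} : Finset ℝ)) : ℝ :=
  Real.exp ((N : ℝ) * t * (cwM N σ) ^ 2 / 2 + (N : ℝ) * x * cwM N σ)

/-- The Curie–Weiss partition function `Z_N(x,t) = ∑_σ B_N(σ; x, t)`. -/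
noncomputable def cwZ (N : ℕ) (x t : ℝ) : ℝ :=
  ∑ σ : Fin N → ({-1, 1} : Finset ℝ), cwB N x t σ

/-- The Curie–Weiss Gibbs average `⟨f⟩_{N,(x,t)} = Z_N(x,t)⁻¹ ∑_σ f(σ) B_N(σ; x, t)`. -/
noncomputable def cwGibbs (N : ℕ) (x t : ℝ) (f : (Fin N → ({-1, 1} : Finset ℝ)) → ℝ) : ℝ :=
  (∑ σ : Fin N → ({-1, 1} : Finset ℝ), f σ * cwB N x t σ) / cwZ N x t


open Real Filter Topology Finset

namespace CW

/-- Binomial term `C(N,j) k^j (N-k)^(N-j)`. -/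
def bterm (N k j : ℕ) : ℕ := N.choose j * k ^ j * (N - k) ^ (N - j)

lemma bterm_sum (N k : ℕ) (hk : k ≤ N) :
    ∑ j ∈ range (N + 1), bterm N k j = N ^ N := by
  have := add_pow k (N - k) N
  rw [Nat.add_sub_cancel' hk] at this
  rw [this]
  refine Finset.sum_congr rfl fun j hj => ?_
  simp [bterm]; ring

lemma bterm_step (N k j : ℕ) (hj : j < N) :
    bterm N k (j + 1) * ((j + 1) * (N - k)) = bterm N k j * ((N - j) * k) := by
  have h1 : N.choose (j + 1) * (j + 1) = N.choose j * (N - j) := Nat.choose_succ_right_eq N j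
  have h2 : N - j = (N - (j + 1)) + 1 := by omega
  calc bterm N k (j + 1) * ((j + 1) * (N - k))
      = (N.choose (j+1) * (j+1)) * (k ^ (j+1) * ((N-k) ^ (N-(j+1)) * (N-k))) := by
        simp [bterm]; ring
    _ = (N.choose j * (N - j)) * (k ^ (j+1) * (N-k) ^ (N-j)) := by
        rw [h1, h2, pow_succ]; ring
    _ = bterm N k j * ((N - j) * k) := by simp [bterm, pow_succ]; ring

lemma bterm_le_max (N k j : ℕ) (hk : k ≤ N) (hj : j ≤ N) :
    bterm N k j ≤ bterm N k k := by
  rcases Nat.eq_or_lt_of_le hk with rfl | hkN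
  · rcases Nat.eq_or_lt_of_le hj with rfl | hjN
    · exact le_rfl
    · have h0 : bterm k k j = 0 := by
        simp only [bterm, Nat.sub_self]
        rw [Nat.zero_pow (by omega : 0 < k - j), Nat.mul_zero]
      simp [h0]
  · -- k < N
    have up : ∀ m, ∀ i, i + m = k → bterm N k i ≤ bterm N k k := by
      intro m
      induction m with
      | zero => intro i hi; simp [show i = k by omega]
      | succ m ih =>
        intro i hi
        have hik : i < k := by omega
        have hstep : bterm N k i ≤ bterm N k (i + 1) := by
          have hle : (i + 1) * (N - k) ≤ (N - i) * k := by
            calc (i+1) * (N-k) ≤ k * (N - i) := Nat.mul_le_mul (by omega) (by omega)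
              _ = (N - i) * k := Nat.mul_comm _ _
          have hpos : 0 < (i + 1) * (N - k) := by
            have : 0 < N - k := by omega
            positivity
          have h : bterm N k i * ((i + 1) * (N - k)) ≤ bterm N k (i+1) * ((i + 1) * (N - k)) := by
            calc bterm N k i * ((i + 1) * (N - k)) ≤ bterm N k i * ((N - i) * k) :=
                  Nat.mul_le_mul_left _ hle
              _ = bterm N k (i+1) * ((i + 1) * (N - k)) := (bterm_step N k i (by omega)).symm
          exact Nat.le_of_mul_le_mul_right h hpos
        exact hstep.trans (ih (i + 1) (by omega))
    have down : ∀ m, ∀ i, k + m = i → i ≤ N → bterm N k i ≤ bterm N k k := by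
      intro m
      induction m with
      | zero => intro i hi _; simp [show i = k by omega]
      | succ m ih =>
        intro i hi hiN
        obtain ⟨p, rfl⟩ : ∃ p, i = p + 1 := ⟨i - 1, by omega⟩
        have hstep : bterm N k (p + 1) ≤ bterm N k p := by
          have hle : (N - p) * k ≤ (p + 1) * (N - k) := by
            calc (N - p) * k ≤ (N - k) * (p + 1) := Nat.mul_le_mul (by omega) (by omega)
              _ = (p + 1) * (N - k) := Nat.mul_comm _ _
          have hpos : 0 < (p + 1) * (N - k) := by
            have : 0 < N - k := by omega
            positivity
          have h : bterm N k (p+1) * ((p + 1) * (N - k)) ≤ bterm N k p * ((p + 1) * (N - k)) := by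
            rw [bterm_step N k p (by omega)]
            exact Nat.mul_le_mul_left _ hle
          exact Nat.le_of_mul_le_mul_right h hpos
        exact hstep.trans (ih p (by omega) (by omega))
    rcases le_or_gt j k with hjk | hkj
    · exact up (k - j) j (by omega)
    · exact down (j - k) j (by omega) hj

lemma bterm_self_le (N k : ℕ) (hk : k ≤ N) : bterm N k k ≤ N ^ N := by
  rw [← bterm_sum N k hk]
  exact Finset.single_le_sum (fun j _ => Nat.zero_le _) (by simp [Finset.mem_range]; omega)

lemma pow_le_bterm (N k : ℕ) (hk : k ≤ N) : N ^ N ≤ (N + 1) * bterm N k k := by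
  rw [← bterm_sum N k hk]
  calc ∑ j ∈ range (N + 1), bterm N k j ≤ ∑ _j ∈ range (N + 1), bterm N k k :=
        Finset.sum_le_sum fun j hj => bterm_le_max N k j hk (Nat.lt_succ_iff.mp (Finset.mem_range.mp hj))
    _ = (N + 1) * bterm N k k := by simp [Finset.sum_const, Finset.card_range, Nat.mul_comm]

end CW

open Real Filter Topology Finset
namespace CW

noncomputable def ent (N k : ℕ) : ℝ := Real.exp ((N : ℝ) * Real.binEntropy ((k : ℝ) / N))

lemma ent_eq (N k : ℕ) (h0 : 0 < k) (hkN : k < N) :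
    (k : ℝ) ^ k * ((N - k : ℕ) : ℝ) ^ (N - k) * ent N k = (N : ℝ) ^ N := by
  have hN : 0 < N := lt_trans h0 hkN
  have hNpos : (0:ℝ) < N := by exact_mod_cast hN
  have hkpos : (0:ℝ) < k := by exact_mod_cast h0
  have hNk : (0:ℝ) < ((N - k : ℕ) : ℝ) := by
    have : 0 < N - k := by omega
    exact_mod_cast this
  have hcast : ((N - k : ℕ) : ℝ) = (N : ℝ) - k := by
    push_cast [Nat.cast_sub hkN.le]; ring
  have h1 : (1 : ℝ) - (k:ℝ)/N = ((N - k : ℕ):ℝ) / N := by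
    rw [hcast]; field_simp
  have hbin : (N : ℝ) * Real.binEntropy ((k : ℝ) / N)
      = (k:ℝ) * Real.log ((k:ℝ)/N)⁻¹ + ((N-k:ℕ):ℝ) * Real.log (((N-k:ℕ):ℝ)/N)⁻¹ := by
    rw [Real.binEntropy, h1]
    field_simp
  have hexp : ent N k = ((k:ℝ)/N)⁻¹ ^ k * (((N-k:ℕ):ℝ)/N)⁻¹ ^ (N - k) := by
    rw [ent, hbin, Real.exp_add]
    rw [show ((k:ℝ) * Real.log ((k:ℝ)/N)⁻¹) = ((k:ℕ):ℝ) * Real.log ((k:ℝ)/N)⁻¹ from rfl]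
    rw [Real.exp_nat_mul, Real.exp_nat_mul]
    rw [Real.exp_log (by positivity), Real.exp_log (by positivity)]
  rw [hexp]
  have e1 : (k : ℝ) ^ k * ((k:ℝ)/N)⁻¹ ^ k = (N:ℝ) ^ k := by
    rw [← mul_pow, inv_div]
    congr 1
    field_simp
  have e2 : ((N - k : ℕ) : ℝ) ^ (N-k) * (((N-k:ℕ):ℝ)/N)⁻¹ ^ (N-k) = (N:ℝ) ^ (N-k) := by
    rw [← mul_pow, inv_div]
    congr 1
    field_simp
  calc (k : ℝ) ^ k * ((N - k : ℕ) : ℝ) ^ (N - k) * (((k:ℝ)/N)⁻¹ ^ k * (((N-k:ℕ):ℝ)/N)⁻¹ ^ (N - k))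
      = ((k : ℝ) ^ k * ((k:ℝ)/N)⁻¹ ^ k) * (((N - k : ℕ) : ℝ) ^ (N-k) * (((N-k:ℕ):ℝ)/N)⁻¹ ^ (N-k)) := by ring
    _ = (N:ℝ) ^ k * (N:ℝ) ^ (N - k) := by rw [e1, e2]
    _ = (N : ℝ) ^ N := by rw [← pow_add]; congr 1; omega

lemma choose_le_ent (N k : ℕ) (hk : k ≤ N) : (N.choose k : ℝ) ≤ ent N k := by
  rcases Nat.eq_zero_or_pos k with rfl | h0
  · simp [ent]
  rcases Nat.eq_or_lt_of_le hk with rfl | hkN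
  · have : (k:ℝ)/(k:ℝ) = 1 := div_self (by exact_mod_cast h0.ne')
    simp [ent, this]
  · have hb := bterm_self_le N k hk
    have hcast : ((N.choose k : ℕ):ℝ) * (k:ℝ)^k * ((N-k:ℕ):ℝ)^(N-k) ≤ (N:ℝ)^N := by
      have := hb
      unfold bterm at this
      exact_mod_cast this
    rw [← ent_eq N k h0 hkN] at hcast
    have hpos : (0:ℝ) < (k:ℝ)^k * ((N-k:ℕ):ℝ)^(N-k) := by
      have h1 : (0:ℝ) < (k:ℝ) := by exact_mod_cast h0
      have h2 : (0:ℝ) < ((N-k:ℕ):ℝ) := by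
        have : 0 < N - k := by omega
        exact_mod_cast this
      positivity
    nlinarith [hpos]

lemma ent_le_choose (N k : ℕ) (hk : k ≤ N) : ent N k ≤ ((N:ℝ) + 1) * (N.choose k : ℝ) := by
  rcases Nat.eq_zero_or_pos k with rfl | h0
  · have h1 : ent N 0 = 1 := by simp [ent]
    rw [h1, Nat.choose_zero_right]
    push_cast
    nlinarith [Nat.cast_nonneg (α := ℝ) N]
  rcases Nat.eq_or_lt_of_le hk with rfl | hkN
  · have hd : (k:ℝ)/(k:ℝ) = 1 := div_self (by exact_mod_cast h0.ne')
    have h1 : ent k k = 1 := by simp [ent, hd]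
    rw [h1, Nat.choose_self]
    push_cast
    nlinarith [Nat.cast_nonneg (α := ℝ) k]
  · have hb := pow_le_bterm N k hk
    have hcast : (N:ℝ)^N ≤ ((N:ℝ)+1) * (((N.choose k : ℕ):ℝ) * (k:ℝ)^k * ((N-k:ℕ):ℝ)^(N-k)) := by
      have := hb
      unfold bterm at this
      exact_mod_cast this
    rw [← ent_eq N k h0 hkN] at hcast
    have hpos : (0:ℝ) < (k:ℝ)^k * ((N-k:ℕ):ℝ)^(N-k) := by
      have h1 : (0:ℝ) < (k:ℝ) := by exact_mod_cast h0
      have h2 : (0:ℝ) < ((N-k:ℕ):ℝ) := by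
        have : 0 < N - k := by omega
        exact_mod_cast this
      positivity
    nlinarith [hpos]

end CW

namespace CW

lemma mem_pm1 : (1:ℝ) ∈ ({-1, 1} : Finset ℝ) := by simp
lemma mem_pm1' : (-1:ℝ) ∈ ({-1, 1} : Finset ℝ) := by simp

open Finset Classical in
lemma count_spin (N k : ℕ) :
    (Finset.univ.filter (fun σ : Fin N → ({-1, 1} : Finset ℝ) =>
      (Finset.univ.filter (fun i => ((σ i : ℝ) = 1))).card = k)).card = N.choose k := by
  classical
  have hcard : N.choose k = (Finset.powersetCard k (Finset.univ : Finset (Fin N))).card := by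
    rw [Finset.card_powersetCard, Finset.card_univ, Fintype.card_fin]
  rw [hcard]
  refine Finset.card_bij' (fun σ _ => Finset.univ.filter (fun i => ((σ i : ℝ) = 1)))
    (fun A _ => fun i => if i ∈ A then ⟨1, mem_pm1⟩ else ⟨-1, mem_pm1'⟩) ?_ ?_ ?_ ?_
  · intro σ hσ
    simp only [Finset.mem_filter, Finset.mem_univ, true_and] at hσ
    simp [Finset.mem_powersetCard, hσ]
  · intro A hA
    simp only [Finset.mem_powersetCard] at hA
    simp only [Finset.mem_filter, Finset.mem_univ, true_and]
    rw [← hA.2]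
    congr 1
    ext i
    simp only [Finset.mem_filter, Finset.mem_univ, true_and]
    by_cases hi : i ∈ A <;> simp [hi] <;> norm_num
  · intro σ hσ
    funext i
    by_cases hi : (σ i : ℝ) = 1
    · simp only [Finset.mem_filter, Finset.mem_univ, true_and, hi, if_pos]
      exact Subtype.ext hi.symm
    · simp only [Finset.mem_filter, Finset.mem_univ, true_and, hi, if_neg]
      have h2 := (σ i).2
      simp only [Finset.mem_insert, Finset.mem_singleton] at h2
      rcases h2 with h | h
      · exact Subtype.ext h.symm
      · exact absurd h hi
  · intro A hA
    ext i
    simp only [Finset.mem_filter, Finset.mem_univ, true_and]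
    by_cases hi : i ∈ A <;> simp [hi] <;> norm_num

open Finset in
lemma cwM_eq (N : ℕ) (σ : Fin N → ({-1, 1} : Finset ℝ)) :
    cwM N σ = (2 * ((Finset.univ.filter (fun i => ((σ i : ℝ) = 1))).card : ℝ) - N) / N := by
  classical
  rw [cwM]
  congr 1
  have hpt : ∀ i, ((σ i : ℝ)) = (if ((σ i : ℝ) = 1) then (1:ℝ) else -1) := by
    intro i
    have h2 := (σ i).2
    simp only [Finset.mem_insert, Finset.mem_singleton] at h2
    rcases h2 with h | h
    · rw [h]; norm_num
    · rw [h]; norm_num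
  rw [Finset.sum_congr rfl (fun i _ => hpt i), Finset.sum_ite, Finset.sum_const,
    Finset.sum_const]
  have hkey := Finset.card_filter_add_card_filter_not
    (s := (Finset.univ : Finset (Fin N))) (p := fun i => ((σ i : ℝ) = 1))
  rw [Finset.card_univ, Fintype.card_fin] at hkey
  have hle : (Finset.univ.filter (fun i => ((σ i : ℝ) = 1))).card ≤ N := by omega
  rw [show (Finset.univ.filter (fun i => ¬ ((σ i : ℝ) = 1))).card
      = N - (Finset.univ.filter (fun i => ((σ i : ℝ) = 1))).card by omega]
  simp only [nsmul_eq_mul]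
  push_cast [Nat.cast_sub hle]
  ring

open Finset in
/-- Reduce a spin sum of a function of the magnetization to a binomial sum. -/
lemma sum_spin (N : ℕ) (h : ℝ → ℝ) :
    ∑ σ : Fin N → ({-1, 1} : Finset ℝ), h (cwM N σ) =
    ∑ k ∈ Finset.range (N+1), (N.choose k : ℝ) * h ((2 * (k:ℝ) - N) / N) := by
  classical
  have hmaps : ∀ σ ∈ (Finset.univ : Finset (Fin N → ({-1, 1} : Finset ℝ))),
      (Finset.univ.filter (fun i => ((σ i : ℝ) = 1))).card ∈ Finset.range (N+1) := by
    intro σ _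
    simp only [Finset.mem_range]
    have := Finset.card_filter_le (Finset.univ : Finset (Fin N)) (fun i => ((σ i : ℝ) = 1))
    rw [Finset.card_univ, Fintype.card_fin] at this
    omega
  calc ∑ σ : Fin N → ({-1, 1} : Finset ℝ), h (cwM N σ)
      = ∑ σ : Fin N → ({-1, 1} : Finset ℝ),
          h ((2 * ((Finset.univ.filter (fun i => ((σ i : ℝ) = 1))).card : ℝ) - N) / N) := by
        refine Finset.sum_congr rfl fun σ _ => ?_
        rw [cwM_eq]
    _ = ∑ k ∈ Finset.range (N+1), ∑ σ ∈ Finset.univ.filter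
          (fun σ : Fin N → ({-1, 1} : Finset ℝ) =>
            (Finset.univ.filter (fun i => ((σ i : ℝ) = 1))).card = k),
          h ((2 * (k:ℝ) - N) / N) := by
        exact (Finset.sum_fiberwise_of_maps_to' hmaps (fun k => h ((2 * (k:ℝ) - N) / N))).symm
    _ = ∑ k ∈ Finset.range (N+1), (N.choose k : ℝ) * h ((2 * (k:ℝ) - N) / N) := by
        refine Finset.sum_congr rfl fun k _ => ?_
        rw [Finset.sum_const, count_spin N k]
        simp only [nsmul_eq_mul]

end CW

namespace CW

/-- The Curie–Weiss free-energy functional `F(m) = t m²/2 + x m + H((1+m)/2)`. -/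
noncomputable def FF (x t m : ℝ) : ℝ := t * m ^ 2 / 2 + x * m + Real.binEntropy ((1 + m) / 2)

/-- `-F'(m)`, defined directly. -/
noncomputable def qq (x t m : ℝ) : ℝ := (Real.log (1 + m) - Real.log (1 - m)) / 2 - t * m - x

lemma FF_continuous (x t : ℝ) : Continuous (FF x t) := by
  unfold FF
  fun_prop

lemma FF_reflect (x t m : ℝ) : FF x t (-m) = FF x t m - 2 * x * m := by
  unfold FF
  have h1 : (1 + -m) / 2 = 1 - (1 + m) / 2 := by ring
  rw [h1, Real.binEntropy_one_sub]
  ring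

lemma qq_hasDerivAt (x t : ℝ) {m : ℝ} (hm : m ∈ Set.Ioo (-1:ℝ) 1) :
    HasDerivAt (qq x t) ((1 / (1 + m) + 1 / (1 - m)) / 2 - t) m := by
  have h1 : (0:ℝ) < 1 + m := by linarith [hm.1]
  have h2 : (0:ℝ) < 1 - m := by linarith [hm.2]
  have d1 : HasDerivAt (fun m : ℝ => Real.log (1 + m)) (1 / (1 + m)) m := by
    have : HasDerivAt (fun m : ℝ => 1 + m) 1 m := (hasDerivAt_id m).const_add 1
    simpa [one_div] using this.log h1.ne'
  have d2 : HasDerivAt (fun m : ℝ => Real.log (1 - m)) (-(1 / (1 - m))) m := by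
    have : HasDerivAt (fun m : ℝ => 1 - m) (-1) m := (hasDerivAt_id m).const_sub 1
    have := this.log h2.ne'
    convert this using 1
    field_simp
  have d3 : HasDerivAt (fun m : ℝ => t * m) t m := by
    simpa using (hasDerivAt_id m).const_mul t
  have := (((d1.sub d2).div_const 2).sub d3).sub_const x
  convert this using 1
  all_goals try rfl
  ring

lemma FF_hasDerivAt (x t : ℝ) {m : ℝ} (hm : m ∈ Set.Ioo (-1:ℝ) 1) :
    HasDerivAt (FF x t) (-(qq x t m)) m := by
  have h1 : (0:ℝ) < 1 + m := by linarith [hm.1]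
  have h2 : (0:ℝ) < 1 - m := by linarith [hm.2]
  have hp0 : ((1 + m) / 2 : ℝ) ≠ 0 := by positivity
  have hp1 : ((1 + m) / 2 : ℝ) ≠ 1 := by
    intro h
    have : m = 1 := by linarith [(div_eq_one_iff_eq (two_ne_zero)).mp h]
    exact absurd this (ne_of_lt hm.2)
  have hb := Real.hasDerivAt_binEntropy hp0 hp1
  have hinner : HasDerivAt (fun m : ℝ => (1 + m) / 2) (1 / 2) m := by
    have : HasDerivAt (fun m : ℝ => 1 + m) 1 m := (hasDerivAt_id m).const_add 1
    simpa using this.div_const 2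
  have hcomp := hb.comp m hinner
  have d1 : HasDerivAt (fun m : ℝ => t * m ^ 2 / 2) (t * m) m := by
    have : HasDerivAt (fun m : ℝ => m ^ 2) (2 * m) m := by
      simpa using hasDerivAt_pow 2 m
    have := (this.const_mul t).div_const 2
    convert this using 1
    all_goals try rfl
    ring
  have d2 : HasDerivAt (fun m : ℝ => x * m) x m := by
    simpa using (hasDerivAt_id m).const_mul x
  have := (d1.add d2).add hcomp
  convert this using 1
  all_goals try rfl
  have e1 : 1 - (1 + m) / 2 = (1 - m) / 2 := by ring
  rw [e1, Real.log_div h2.ne' (two_ne_zero), Real.log_div h1.ne' (two_ne_zero)]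
  unfold qq
  ring

lemma qq_continuousOn (x t : ℝ) : ContinuousOn (qq x t) (Set.Ioo (-1:ℝ) 1) :=
  fun m hm => ((qq_hasDerivAt x t hm).continuousAt).continuousWithinAt

lemma qq_strictConvexOn (x t : ℝ) : StrictConvexOn ℝ (Set.Ico (0:ℝ) 1) (qq x t) := by
  have hsub : Set.Ico (0:ℝ) 1 ⊆ Set.Ioo (-1:ℝ) 1 := fun m hm => ⟨by linarith [hm.1], hm.2⟩
  refine StrictMonoOn.strictConvexOn_of_deriv (convex_Ico 0 1)
    ((qq_continuousOn x t).mono hsub) ?_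
  rw [interior_Ico]
  intro m1 hm1 m2 hm2 h12
  have hd1 : deriv (qq x t) m1 = (1 / (1 + m1) + 1 / (1 - m1)) / 2 - t :=
    (qq_hasDerivAt x t ⟨by linarith [hm1.1], hm1.2⟩).deriv
  have hd2 : deriv (qq x t) m2 = (1 / (1 + m2) + 1 / (1 - m2)) / 2 - t :=
    (qq_hasDerivAt x t ⟨by linarith [hm2.1], hm2.2⟩).deriv
  rw [hd1, hd2]
  have e1 : (1 / (1 + m1) + 1 / (1 - m1)) / 2 = 1 / (1 - m1 ^ 2) := by
    have h1 : (0:ℝ) < 1 + m1 := by linarith [hm1.1]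
    have h2 : (0:ℝ) < 1 - m1 := by linarith [hm1.2]
    have h3 : (0:ℝ) < 1 - m1 ^ 2 := by nlinarith
    field_simp
    ring
  have e2 : (1 / (1 + m2) + 1 / (1 - m2)) / 2 = 1 / (1 - m2 ^ 2) := by
    have h1 : (0:ℝ) < 1 + m2 := by linarith [hm2.1]
    have h2 : (0:ℝ) < 1 - m2 := by linarith [hm2.2]
    have h3 : (0:ℝ) < 1 - m2 ^ 2 := by nlinarith
    field_simp
    ring
  rw [e1, e2]
  have hlt : 1 - m2 ^ 2 < 1 - m1 ^ 2 := by nlinarith [hm1.1, hm2.2]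
  have hpos : (0:ℝ) < 1 - m2 ^ 2 := by nlinarith [hm2.1, hm2.2]
  have := one_div_lt_one_div_of_lt hpos hlt
  linarith

end CW

namespace CW

lemma qq_zero (x t : ℝ) : qq x t 0 = -x := by simp [qq]

lemma qq_pos_of_big (x t : ℝ) (hx : 0 ≤ x) (ht : 0 ≤ t) {m : ℝ}
    (hm1 : 1 - Real.exp (-2*(t+x)) / 2 < m) (hm2 : m < 1) : 0 < qq x t m := by
  have hm0 : 0 < m := by
    have := Real.exp_nonneg (-2*(t+x))
    have hle : Real.exp (-2*(t+x)) ≤ 1 := Real.exp_le_one_iff.mpr (by nlinarith)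
    nlinarith
  have h2 : (0:ℝ) < 1 - m := by linarith
  have hlog1 : 0 ≤ Real.log (1 + m) := Real.log_nonneg (by linarith)
  have hlog2 : Real.log (1 - m) < -2*(t+x) := by
    have : 1 - m < Real.exp (-2*(t+x)) := by
      have := Real.exp_pos (-2*(t+x))
      nlinarith
    calc Real.log (1 - m) < Real.log (Real.exp (-2*(t+x))) :=
          Real.log_lt_log h2 this
      _ = -2*(t+x) := Real.log_exp _
  have htm : t * m ≤ t := by nlinarith
  unfold qq
  nlinarith

/-- Structure of the maximizers of `FF x t` on `[-1,1]`, for `x ≥ 0`. -/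
lemma exists_max (x t : ℝ) (hx : 0 ≤ x) (ht : 0 ≤ t) :
    ∃ c, c ∈ Set.Ico (0:ℝ) 1 ∧
      (∀ m ∈ Set.Icc (-1:ℝ) 1, FF x t m ≤ FF x t c) ∧
      (∀ m ∈ Set.Icc (-1:ℝ) 1, m ≠ c → m ≠ -c → FF x t m < FF x t c) ∧
      (0 < x → ∀ m ∈ Set.Icc (-1:ℝ) 1, m ≠ c → FF x t m < FF x t c) := by
  set b₀ : ℝ := 1 - Real.exp (-2*(t+x)) / 2 with hb₀
  have hexp1 : Real.exp (-2*(t+x)) ≤ 1 := Real.exp_le_one_iff.mpr (by nlinarith)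
  have hexp0 : 0 < Real.exp (-2*(t+x)) := Real.exp_pos _
  have hb₀mem : b₀ ∈ Set.Ico (0:ℝ) 1 := by
    constructor
    · rw [hb₀]; nlinarith
    · rw [hb₀]; nlinarith
  set A : Set ℝ := {m | m ∈ Set.Icc (0:ℝ) b₀ ∧ qq x t m ≤ 0} with hA
  have hsubIoo : Set.Icc (0:ℝ) b₀ ⊆ Set.Ioo (-1:ℝ) 1 := by
    intro m hm
    exact ⟨by linarith [hm.1], by rcases hm with ⟨h1, h2⟩; rcases hb₀mem with ⟨h3, h4⟩; linarith⟩
  have hAclosed : IsClosed A := by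
    have : A = Set.Icc (0:ℝ) b₀ ∩ (qq x t) ⁻¹' (Set.Iic 0) := rfl
    rw [this]
    exact ContinuousOn.preimage_isClosed_of_isClosed
      ((qq_continuousOn x t).mono hsubIoo) isClosed_Icc isClosed_Iic
  have hAcompact : IsCompact A := (isCompact_Icc (a := (0:ℝ)) (b := b₀)).of_isClosed_subset
    hAclosed (fun m hm => hm.1)
  have hA0 : (0:ℝ) ∈ A := by
    refine ⟨⟨le_refl 0, hb₀mem.1⟩, ?_⟩
    rw [qq_zero]; linarith
  have hAne : A.Nonempty := ⟨0, hA0⟩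
  set c := sSup A with hc
  have hcA : c ∈ A := hAcompact.sSup_mem hAne
  have hc0 : 0 ≤ c := hcA.1.1
  have hcb : c ≤ b₀ := hcA.1.2
  have hc1 : c < 1 := lt_of_le_of_lt hcb hb₀mem.2
  have hqc : qq x t c ≤ 0 := hcA.2
  have hbdd : BddAbove A := hAcompact.bddAbove
  -- q > 0 on (c, 1)
  have hqpos : ∀ m ∈ Set.Ioo c 1, 0 < qq x t m := by
    intro m hm
    rcases le_or_gt m b₀ with hmb | hmb
    · by_contra hcon
      push_neg at hcon
      have : m ∈ A := ⟨⟨le_trans hc0 hm.1.le, hmb⟩, hcon⟩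
      have := le_csSup hbdd this
      linarith [hm.1]
    · exact qq_pos_of_big x t hx ht hmb hm.2
  -- q < 0 on (0, c)
  have hqneg : ∀ m ∈ Set.Ioo (0:ℝ) c, qq x t m < 0 := by
    intro m hm
    have hcpos : 0 < c := lt_trans hm.1 hm.2
    have hconv := qq_strictConvexOn x t
    have h0mem : (0:ℝ) ∈ Set.Ico (0:ℝ) 1 := ⟨le_refl 0, by norm_num⟩
    have hcmem : c ∈ Set.Ico (0:ℝ) 1 := ⟨hc0, hc1⟩
    have ha : 0 < 1 - m / c := by
      rw [sub_pos, div_lt_one hcpos]; exact hm.2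
    have hb : 0 < m / c := div_pos hm.1 hcpos
    have hab : (1 - m / c) + m / c = 1 := by ring
    have := hconv.2 h0mem hcmem (by intro h; exact absurd h.symm (ne_of_gt hcpos)) ha hb hab
    have hcomb : (1 - m / c) • (0:ℝ) + (m / c) • c = m := by
      simp [smul_eq_mul]
      field_simp
    rw [hcomb] at this
    have := this
    rw [smul_eq_mul, smul_eq_mul, qq_zero] at this
    have hq0 : (1 - m / c) * (-x) ≤ 0 := by
      apply mul_nonpos_iff.mpr
      left
      constructor <;> [linarith; linarith]
    nlinarith [mul_nonneg hb.le (neg_nonneg.mpr hqc)]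
  -- FF strictly increasing on [0, c], strictly decreasing on [c, 1]
  have hmono : StrictMonoOn (FF x t) (Set.Icc 0 c) := by
    apply strictMonoOn_of_deriv_pos (convex_Icc 0 c) (FF_continuous x t).continuousOn
    intro m hm
    rw [interior_Icc] at hm
    have hmIoo : m ∈ Set.Ioo (-1:ℝ) 1 := ⟨by linarith [hm.1], by linarith [hm.2, hc1]⟩
    rw [(FF_hasDerivAt x t hmIoo).deriv]
    have := hqneg m ⟨hm.1, hm.2⟩
    linarith
  have hanti : StrictAntiOn (FF x t) (Set.Icc c 1) := by
    apply strictAntiOn_of_deriv_neg (convex_Icc c 1) (FF_continuous x t).continuousOn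
    intro m hm
    rw [interior_Icc] at hm
    have hmIoo : m ∈ Set.Ioo (-1:ℝ) 1 := ⟨by linarith [hm.1, hc0], hm.2⟩
    rw [(FF_hasDerivAt x t hmIoo).deriv]
    have := hqpos m ⟨hm.1, hm.2⟩
    linarith
  -- max on [0,1]
  have hmax01 : ∀ m ∈ Set.Icc (0:ℝ) 1, m ≠ c → FF x t m < FF x t c := by
    intro m hm hne
    rcases lt_or_gt_of_ne hne with hlt | hgt
    · exact hmono ⟨hm.1, hlt.le⟩ ⟨hc0, le_refl c⟩ hlt
    · exact hanti ⟨le_refl c, hc1.le⟩ ⟨hgt.le, hm.2⟩ hgt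
  have hmax01' : ∀ m ∈ Set.Icc (0:ℝ) 1, FF x t m ≤ FF x t c := by
    intro m hm
    by_cases hne : m = c
    · rw [hne]
    · exact (hmax01 m hm hne).le
  refine ⟨c, ⟨hc0, hc1⟩, ?_, ?_, ?_⟩
  · intro m hm
    rcases le_or_gt 0 m with h0m | h0m
    · exact hmax01' m ⟨h0m, hm.2⟩
    · have hrefl := FF_reflect x t (-m)
      rw [neg_neg] at hrefl
      have hneg : -m ∈ Set.Icc (0:ℝ) 1 := ⟨by linarith, by linarith [hm.1]⟩
      have h1 := hmax01' (-m) hneg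
      nlinarith
  · intro m hm hne hne'
    rcases le_or_gt 0 m with h0m | h0m
    · exact hmax01 m ⟨h0m, hm.2⟩ hne
    · have hrefl := FF_reflect x t (-m)
      rw [neg_neg] at hrefl
      have hneg : -m ∈ Set.Icc (0:ℝ) 1 := ⟨by linarith, by linarith [hm.1]⟩
      have hnegne : -m ≠ c := by
        intro h
        exact hne' (by rw [← h]; ring)
      have h1 := hmax01 (-m) hneg hnegne
      nlinarith
  · intro hxpos m hm hne
    rcases le_or_gt 0 m with h0m | h0m
    · exact hmax01 m ⟨h0m, hm.2⟩ hne
    · have hrefl := FF_reflect x t (-m)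
      rw [neg_neg] at hrefl
      have hneg : -m ∈ Set.Icc (0:ℝ) 1 := ⟨by linarith, by linarith [hm.1]⟩
      have h1 := hmax01' (-m) hneg
      nlinarith

/-- Turn strictness of the maximum into a uniform gap `δ` outside an open set `S`. -/
lemma exists_delta {f : ℝ → ℝ} (hf : Continuous f) {c : ℝ} {S : Set ℝ} (hS : IsOpen S)
    (hstrict : ∀ m ∈ Set.Icc (-1:ℝ) 1, m ∉ S → f m < f c) :
    ∃ δ > 0, ∀ m ∈ Set.Icc (-1:ℝ) 1, m ∉ S → f m ≤ f c - δ := by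
  set K : Set ℝ := Set.Icc (-1:ℝ) 1 ∩ Sᶜ with hK
  have hKcompact : IsCompact K :=
    (isCompact_Icc (a := (-1:ℝ)) (b := 1)).inter_right hS.isClosed_compl
  rcases K.eq_empty_or_nonempty with hKe | hKne
  · refine ⟨1, one_pos, fun m hm hms => absurd ?_ (Set.notMem_empty m)⟩
    rw [← hKe]
    exact ⟨hm, hms⟩
  · obtain ⟨m₀, hm₀, hmax⟩ := hKcompact.exists_isMaxOn hKne hf.continuousOn
    refine ⟨f c - f m₀, by linarith [hstrict m₀ hm₀.1 hm₀.2], fun m hm hms => ?_⟩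
    have := hmax ⟨hm, hms⟩
    simp only [Set.mem_setOf_eq] at this
    linarith

end CW

namespace CW

noncomputable def mu (N k : ℕ) : ℝ := (2*(k:ℝ) - N)/N
noncomputable def W (x t : ℝ) (N k : ℕ) : ℝ :=
  Real.exp ((N:ℝ)*t*(mu N k)^2/2 + (N:ℝ)*x*(mu N k))

instance : Nonempty ({-1, 1} : Finset ℝ) := ⟨⟨1, mem_pm1⟩⟩

lemma cwZ_pos (N : ℕ) (x t : ℝ) : 0 < cwZ N x t :=
  Finset.sum_pos (fun σ _ => Real.exp_pos _) Finset.univ_nonempty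

lemma cwZ_eq (N : ℕ) (x t : ℝ) :
    cwZ N x t = ∑ k ∈ Finset.range (N+1), (N.choose k : ℝ) * W x t N k := by
  have := sum_spin N (fun m => Real.exp ((N:ℝ)*t*m^2/2 + (N:ℝ)*x*m))
  exact this

lemma sum_spin_B (N : ℕ) (x t : ℝ) (u : ℝ → ℝ) :
    ∑ σ : Fin N → ({-1, 1} : Finset ℝ), u (cwM N σ) * cwB N x t σ
      = ∑ k ∈ Finset.range (N+1),
          (N.choose k : ℝ) * (u (mu N k) * W x t N k) := by
  have := sum_spin N (fun m => u m * Real.exp ((N:ℝ)*t*m^2/2 + (N:ℝ)*x*m))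
  exact this

lemma cwM_mem (N : ℕ) (σ : Fin N → ({-1, 1} : Finset ℝ)) :
    cwM N σ ∈ Set.Icc (-1:ℝ) 1 := by
  rcases Nat.eq_zero_or_pos N with rfl | hN
  · simp [cwM]
  have hNpos : (0:ℝ) < N := by exact_mod_cast hN
  rw [cwM_eq]
  set K := (Finset.univ.filter (fun i => ((σ i : ℝ) = 1))).card with hK
  have hKle : K ≤ N := by
    have := Finset.card_filter_le (Finset.univ : Finset (Fin N)) (fun i => ((σ i : ℝ) = 1))
    rw [Finset.card_univ, Fintype.card_fin] at this
    exact this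
  have hKle' : (K:ℝ) ≤ N := by exact_mod_cast hKle
  have hK0 : (0:ℝ) ≤ K := by positivity
  constructor
  · rw [le_div_iff₀ hNpos]; nlinarith
  · rw [div_le_one hNpos]; nlinarith

lemma mu_mem (N k : ℕ) (hk : k ≤ N) (hN : 1 ≤ N) : mu N k ∈ Set.Icc (-1:ℝ) 1 := by
  have hNpos : (0:ℝ) < N := by exact_mod_cast hN
  have hk' : (k:ℝ) ≤ N := by exact_mod_cast hk
  have hk0 : (0:ℝ) ≤ k := by positivity
  unfold mu
  constructor
  · rw [le_div_iff₀ hNpos]; nlinarith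
  · rw [div_le_one hNpos]; nlinarith

lemma half_mu (N k : ℕ) (hN : 1 ≤ N) : (1 + mu N k)/2 = (k:ℝ)/N := by
  have hNpos : (0:ℝ) < N := by exact_mod_cast hN
  unfold mu
  field_simp
  ring

lemma exp_FF_eq (x t : ℝ) (N k : ℕ) (hN : 1 ≤ N) :
    Real.exp ((N:ℝ) * FF x t (mu N k)) = ent N k * W x t N k := by
  unfold FF ent W
  rw [half_mu N k hN, ← Real.exp_add]
  congr 1
  ring

lemma T_le (x t : ℝ) (N k : ℕ) (hk : k ≤ N) (hN : 1 ≤ N) :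
    (N.choose k : ℝ) * W x t N k ≤ Real.exp ((N:ℝ) * FF x t (mu N k)) := by
  rw [exp_FF_eq x t N k hN]
  exact mul_le_mul_of_nonneg_right (choose_le_ent N k hk) (Real.exp_pos _).le

lemma le_T (x t : ℝ) (N k : ℕ) (hk : k ≤ N) (hN : 1 ≤ N) :
    Real.exp ((N:ℝ) * FF x t (mu N k)) ≤ ((N:ℝ)+1) * ((N.choose k : ℝ) * W x t N k) := by
  rw [exp_FF_eq x t N k hN, ← mul_assoc]
  exact mul_le_mul_of_nonneg_right (ent_le_choose N k hk) (Real.exp_pos _).le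

lemma poly_exp_tendsto {b : ℝ} (hb : 0 < b) :
    Tendsto (fun N : ℕ => ((N:ℝ)+1)^2 * Real.exp (-(b * N))) atTop (𝓝 0) := by
  have key : Tendsto (fun u : ℝ => (u/b+1)^2 * Real.exp (-u)) atTop (𝓝 0) := by
    have h2 := tendsto_pow_mul_exp_neg_atTop_nhds_zero 2
    have h1 := tendsto_pow_mul_exp_neg_atTop_nhds_zero 1
    have h0 := tendsto_pow_mul_exp_neg_atTop_nhds_zero 0
    have hsum := ((h2.const_mul ((1:ℝ)/b^2)).add (h1.const_mul ((2:ℝ)/b))).add h0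
    simp only [mul_zero, add_zero, zero_add] at hsum
    convert hsum using 2 with u
    have hbne : b ≠ 0 := hb.ne'
    field_simp
    ring
  have hcomp : Tendsto (fun N : ℕ => b * (N:ℝ)) atTop atTop :=
    (tendsto_natCast_atTop_atTop (R := ℝ)).const_mul_atTop hb
  have := key.comp hcomp
  convert this using 2 with N
  simp only [Function.comp_apply]
  rw [mul_comm b (N:ℝ), mul_div_assoc, div_self hb.ne', mul_one, mul_comm (N:ℝ) b]

open scoped Classical in
open Finset in
lemma bad_ratio (x t : ℝ) (S : Set ℝ) (c : ℝ) (hc : c ∈ Set.Ico (0:ℝ) 1) (δ : ℝ) (hδ : 0 < δ)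
    (hgap : ∀ m ∈ Set.Icc (-1:ℝ) 1, m ∉ S → FF x t m ≤ FF x t c - δ) :
    Tendsto (fun N => (∑ σ ∈ Finset.univ.filter
        (fun σ : Fin N → ({-1,1} : Finset ℝ) => cwM N σ ∉ S), cwB N x t σ) / cwZ N x t)
      atTop (𝓝 0) := by
  classical
  set kst : ℕ → ℕ := fun N => ⌊(N:ℝ)*(1+c)/2⌋₊ with hkst
  set mst : ℕ → ℝ := fun N => mu N (kst N) with hmst
  have hkstle : ∀ N : ℕ, 1 ≤ N → kst N ≤ N := by
    intro N hN
    have h1 : (N:ℝ)*(1+c)/2 ≤ (N:ℝ) := by nlinarith [hc.2, hc.1, (Nat.cast_pos (α := ℝ)).mpr hN]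
    calc kst N ≤ ⌊(N:ℝ)⌋₊ := Nat.floor_le_floor h1
      _ = N := Nat.floor_natCast (R := ℝ) N
  have hmst_close : ∀ N : ℕ, 1 ≤ N → |mst N - c| ≤ 2/(N:ℝ) := by
    intro N hN
    have hNpos : (0:ℝ) < N := by exact_mod_cast hN
    have hy0 : (0:ℝ) ≤ (N:ℝ)*(1+c)/2 := by nlinarith [hc.1]
    have hfl : ((kst N : ℕ):ℝ) ≤ (N:ℝ)*(1+c)/2 := Nat.floor_le hy0
    have hfu : (N:ℝ)*(1+c)/2 < (kst N : ℝ) + 1 := Nat.lt_floor_add_one _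
    have hmt : mst N = (2*((kst N : ℕ):ℝ) - N)/N := rfl
    have heq : mst N - c = (2*((kst N : ℕ):ℝ) - N - c*N)/N := by
      rw [hmt]
      field_simp
    have hnum2 : |2*((kst N : ℕ):ℝ) - N - c*N| ≤ 2 := by
      rw [abs_le]
      constructor
      · nlinarith
      · nlinarith
    rw [heq, abs_div, abs_of_pos hNpos]
    exact (div_le_div_iff_of_pos_right hNpos).mpr hnum2
  have hmst_tendsto : Tendsto mst atTop (𝓝 c) := by
    have h0 : Tendsto (fun N : ℕ => mst N - c) atTop (𝓝 0) := by
      apply squeeze_zero_norm' ?_ (tendsto_const_div_atTop_nhds_zero_nat 2)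
      filter_upwards [eventually_ge_atTop 1] with N hN
      simpa [Real.norm_eq_abs] using hmst_close N hN
    have := h0.add (tendsto_const_nhds (x := c))
    simpa using this
  have hFF_tendsto : Tendsto (fun N => FF x t (mst N)) atTop (𝓝 (FF x t c)) :=
    ((FF_continuous x t).continuousAt).tendsto.comp hmst_tendsto
  have hev : ∀ᶠ N in atTop, FF x t c - δ/2 ≤ FF x t (mst N) :=
    hFF_tendsto.eventually (eventually_ge_nhds (by linarith))
  -- the quantitative bound
  have hbound : ∀ᶠ N in atTop,
      (∑ σ ∈ Finset.univ.filter
        (fun σ : Fin N → ({-1,1} : Finset ℝ) => cwM N σ ∉ S), cwB N x t σ) / cwZ N x t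
      ≤ ((N:ℝ)+1)^2 * Real.exp (-((δ/2) * N)) := by
    filter_upwards [eventually_ge_atTop 1, hev] with N hN hevN
    have hNpos : (0:ℝ) < N := by exact_mod_cast hN
    -- numerator as k-sum
    have hnum : (∑ σ ∈ Finset.univ.filter
        (fun σ : Fin N → ({-1,1} : Finset ℝ) => cwM N σ ∉ S), cwB N x t σ)
        = ∑ k ∈ Finset.range (N+1),
            (N.choose k : ℝ) * ((if mu N k ∉ S then (1:ℝ) else 0) * W x t N k) := by
      rw [← sum_spin_B N x t (fun m => if m ∉ S then (1:ℝ) else 0)]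
      rw [Finset.sum_filter]
      refine Finset.sum_congr rfl fun σ _ => ?_
      by_cases hσ : cwM N σ ∉ S <;> simp [hσ]
    have hnum_le : (∑ σ ∈ Finset.univ.filter
        (fun σ : Fin N → ({-1,1} : Finset ℝ) => cwM N σ ∉ S), cwB N x t σ)
        ≤ ((N:ℝ)+1) * Real.exp ((N:ℝ) * (FF x t c - δ)) := by
      rw [hnum]
      have hterm : ∀ k ∈ Finset.range (N+1),
          (N.choose k : ℝ) * ((if mu N k ∉ S then (1:ℝ) else 0) * W x t N k)
          ≤ Real.exp ((N:ℝ) * (FF x t c - δ)) := by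
        intro k hk
        rw [Finset.mem_range] at hk
        have hkN : k ≤ N := by omega
        by_cases hS : mu N k ∉ S
        · rw [if_pos hS, one_mul]
          calc (N.choose k : ℝ) * W x t N k ≤ Real.exp ((N:ℝ) * FF x t (mu N k)) :=
                T_le x t N k hkN hN
            _ ≤ Real.exp ((N:ℝ) * (FF x t c - δ)) := by
                apply Real.exp_le_exp.mpr
                have := hgap (mu N k) (mu_mem N k hkN hN) hS
                nlinarith
        · rw [if_neg hS, zero_mul, mul_zero]
          exact (Real.exp_pos _).le
      calc ∑ k ∈ Finset.range (N+1),
            (N.choose k : ℝ) * ((if mu N k ∉ S then (1:ℝ) else 0) * W x t N k)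
          ≤ ∑ _k ∈ Finset.range (N+1), Real.exp ((N:ℝ) * (FF x t c - δ)) :=
            Finset.sum_le_sum hterm
        _ = ((N:ℝ)+1) * Real.exp ((N:ℝ) * (FF x t c - δ)) := by
            rw [Finset.sum_const, Finset.card_range]
            push_cast
            ring
    have hZ_ge : Real.exp ((N:ℝ) * (FF x t c - δ/2)) / ((N:ℝ)+1) ≤ cwZ N x t := by
      have h1 : Real.exp ((N:ℝ) * (FF x t c - δ/2)) ≤ Real.exp ((N:ℝ) * FF x t (mst N)) := by
        apply Real.exp_le_exp.mpr
        nlinarith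
      have h2 : Real.exp ((N:ℝ) * FF x t (mst N))
          ≤ ((N:ℝ)+1) * ((N.choose (kst N) : ℝ) * W x t N (kst N)) :=
        le_T x t N (kst N) (hkstle N hN) hN
      have h3 : (N.choose (kst N) : ℝ) * W x t N (kst N) ≤ cwZ N x t := by
        rw [cwZ_eq]
        apply Finset.single_le_sum (f := fun k => (N.choose k : ℝ) * W x t N k)
        · intro k _
          exact mul_nonneg (by positivity) (le_of_lt (by unfold W; exact Real.exp_pos _))
        · rw [Finset.mem_range]
          have := hkstle N hN
          omega
      have hN1 : (0:ℝ) < (N:ℝ)+1 := by positivity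
      rw [div_le_iff₀ hN1]
      calc Real.exp ((N:ℝ) * (FF x t c - δ/2)) ≤ ((N:ℝ)+1) * ((N.choose (kst N) : ℝ) * W x t N (kst N)) :=
            h1.trans h2
        _ ≤ ((N:ℝ)+1) * cwZ N x t := by
            apply mul_le_mul_of_nonneg_left h3 (by positivity)
        _ = cwZ N x t * ((N:ℝ)+1) := by ring
    -- combine
    have hZpos := cwZ_pos N x t
    have hBpos : (0:ℝ) < Real.exp ((N:ℝ) * (FF x t c - δ/2)) / ((N:ℝ)+1) := by positivity
    have hnum_nonneg : (0:ℝ) ≤ ∑ σ ∈ Finset.univ.filter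
        (fun σ : Fin N → ({-1,1} : Finset ℝ) => cwM N σ ∉ S), cwB N x t σ :=
      Finset.sum_nonneg fun σ _ => (Real.exp_pos _).le
    calc (∑ σ ∈ Finset.univ.filter
        (fun σ : Fin N → ({-1,1} : Finset ℝ) => cwM N σ ∉ S), cwB N x t σ) / cwZ N x t
        ≤ (((N:ℝ)+1) * Real.exp ((N:ℝ) * (FF x t c - δ)))
            / (Real.exp ((N:ℝ) * (FF x t c - δ/2)) / ((N:ℝ)+1)) := by
          apply div_le_div₀ (by positivity) hnum_le hBpos hZ_ge
      _ = ((N:ℝ)+1)^2 * Real.exp (-((δ/2) * N)) := by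
          rw [div_div_eq_mul_div]
          rw [show ((N:ℝ)+1) * Real.exp ((N:ℝ) * (FF x t c - δ)) * ((N:ℝ)+1)
              = ((N:ℝ)+1)^2 * Real.exp ((N:ℝ) * (FF x t c - δ)) by ring]
          rw [mul_div_assoc, ← Real.exp_sub]
          congr 2
          ring
  have hnonneg : ∀ᶠ N in atTop, (0:ℝ) ≤ (∑ σ ∈ Finset.univ.filter
      (fun σ : Fin N → ({-1,1} : Finset ℝ) => cwM N σ ∉ S), cwB N x t σ) / cwZ N x t := by
    filter_upwards with N
    exact div_nonneg (Finset.sum_nonneg fun σ _ => (Real.exp_pos _).le) (cwZ_pos N x t).le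
  exact squeeze_zero' hnonneg hbound (poly_exp_tendsto (by linarith : (0:ℝ) < δ/2))

end CW

namespace CW

open scoped Classical in
open Finset in
lemma moment_tendsto (x t : ℝ) (hx : 0 ≤ x) (ht : 0 ≤ t) :
    ∃ c : ℝ, ∀ g : ℝ → ℝ, Continuous g → ((∀ m, g (-m) = g m) ∨ 0 < x) →
      Tendsto (fun N => cwGibbs N x t (fun σ => g (cwM N σ))) atTop (𝓝 (g c)) := by
  obtain ⟨c, hcIco, hmax, hstrict2, hstrict3⟩ := exists_max x t hx ht
  refine ⟨c, ?_⟩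
  intro g hg hcase
  rw [Metric.tendsto_atTop]
  intro η hη
  -- uniform bound for |g - g c| on [-1,1]
  obtain ⟨M₀, hM₀⟩ := (isCompact_Icc (a := (-1:ℝ)) (b := 1)).exists_bound_of_continuousOn
      ((hg.sub continuous_const).continuousOn (s := Set.Icc (-1:ℝ) 1))
  set M : ℝ := max M₀ 1 with hM
  have hMpos : 0 < M := lt_of_lt_of_le one_pos (le_max_right _ _)
  have hMbound : ∀ m ∈ Set.Icc (-1:ℝ) 1, |g m - g c| ≤ M := by
    intro m hm
    calc |g m - g c| = ‖g m - g c‖ := (Real.norm_eq_abs _).symm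
      _ ≤ M₀ := hM₀ m hm
      _ ≤ M := le_max_left _ _
  -- a good open set S
  obtain ⟨S, hSopen, hSgood, hSstrict⟩ : ∃ S : Set ℝ, IsOpen S ∧
      (∀ m ∈ Set.Icc (-1:ℝ) 1, m ∈ S → |g m - g c| < η/2) ∧
      (∀ m ∈ Set.Icc (-1:ℝ) 1, m ∉ S → FF x t m < FF x t c) := by
    obtain ⟨ε₁, hε₁pos, hε₁⟩ := Metric.continuousAt_iff.mp hg.continuousAt (η/2) (by positivity)
    obtain ⟨ε₂, hε₂pos, hε₂⟩ := Metric.continuousAt_iff.mp (hg.continuousAt (x := -c)) (η/2)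
      (by positivity)
    rcases hcase with heven | hxpos
    · refine ⟨Metric.ball c ε₁ ∪ Metric.ball (-c) ε₂,
        Metric.isOpen_ball.union Metric.isOpen_ball, ?_, ?_⟩
      · intro m _ hmS
        rcases hmS with h | h
        · have := hε₁ (Metric.mem_ball.mp h)
          rwa [Real.dist_eq] at this
        · have := hε₂ (Metric.mem_ball.mp h)
          rw [Real.dist_eq] at this
          have hgc : g (-c) = g c := heven c
          rwa [hgc] at this
      · intro m hm hmS
        simp only [Set.mem_union, not_or] at hmS
        have h1 : m ≠ c := by
          intro h; exact hmS.1 (by rw [h]; exact Metric.mem_ball_self hε₁pos)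
        have h2 : m ≠ -c := by
          intro h; exact hmS.2 (by rw [h]; exact Metric.mem_ball_self hε₂pos)
        exact hstrict2 m hm h1 h2
    · refine ⟨Metric.ball c ε₁, Metric.isOpen_ball, ?_, ?_⟩
      · intro m _ hmS
        have := hε₁ (Metric.mem_ball.mp hmS)
        rwa [Real.dist_eq] at this
      · intro m hm hmS
        have h1 : m ≠ c := by
          intro h; exact hmS (by rw [h]; exact Metric.mem_ball_self hε₁pos)
        exact hstrict3 hxpos m hm h1
  obtain ⟨δ, hδpos, hgap⟩ := exists_delta (FF_continuous x t) hSopen hSstrict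
  have hratio := bad_ratio x t S c hcIco δ hδpos hgap
  rw [Metric.tendsto_atTop] at hratio
  obtain ⟨N₀, hN₀⟩ := hratio (η/(2*M)) (by positivity)
  refine ⟨N₀, fun N hNN => ?_⟩
  have hZpos := cwZ_pos N x t
  have hBpos : ∀ σ : Fin N → ({-1,1} : Finset ℝ), 0 < cwB N x t σ := fun σ => Real.exp_pos _
  set bad : ℝ := ∑ σ ∈ Finset.univ.filter
      (fun σ : Fin N → ({-1,1} : Finset ℝ) => cwM N σ ∉ S), cwB N x t σ with hbad
  have hbadnn : 0 ≤ bad := Finset.sum_nonneg fun σ _ => (Real.exp_pos _).le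
  have hratioN : bad / cwZ N x t < η/(2*M) := by
    have := hN₀ N hNN
    rw [Real.dist_eq, sub_zero, abs_of_nonneg (div_nonneg hbadnn hZpos.le)] at this
    exact this
  -- decompose the Gibbs average
  have hgibbs : cwGibbs N x t (fun σ => g (cwM N σ)) - g c
      = (∑ σ : Fin N → ({-1,1} : Finset ℝ), (g (cwM N σ) - g c) * cwB N x t σ) / cwZ N x t := by
    rw [cwGibbs]
    have hsum : ∑ σ : Fin N → ({-1,1} : Finset ℝ), (g (cwM N σ) - g c) * cwB N x t σ
        = (∑ σ : Fin N → ({-1,1} : Finset ℝ), g (cwM N σ) * cwB N x t σ) - g c * cwZ N x t := by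
      rw [cwZ, Finset.mul_sum, ← Finset.sum_sub_distrib]
      exact Finset.sum_congr rfl fun σ _ => by ring
    rw [hsum, sub_div, mul_div_assoc, div_self hZpos.ne', mul_one]
  rw [Real.dist_eq, hgibbs]
  have habs : |∑ σ : Fin N → ({-1,1} : Finset ℝ), (g (cwM N σ) - g c) * cwB N x t σ|
      ≤ (η/2) * cwZ N x t + M * bad := by
    calc |∑ σ : Fin N → ({-1,1} : Finset ℝ), (g (cwM N σ) - g c) * cwB N x t σ|
        ≤ ∑ σ : Fin N → ({-1,1} : Finset ℝ), |(g (cwM N σ) - g c) * cwB N x t σ| :=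
          Finset.abs_sum_le_sum_abs _ _
      _ = ∑ σ : Fin N → ({-1,1} : Finset ℝ), |g (cwM N σ) - g c| * cwB N x t σ := by
          refine Finset.sum_congr rfl fun σ _ => ?_
          rw [abs_mul, abs_of_pos (hBpos σ)]
      _ = (∑ σ ∈ Finset.univ.filter
              (fun σ : Fin N → ({-1,1} : Finset ℝ) => cwM N σ ∈ S),
              |g (cwM N σ) - g c| * cwB N x t σ)
          + ∑ σ ∈ Finset.univ.filter
              (fun σ : Fin N → ({-1,1} : Finset ℝ) => ¬ (cwM N σ ∈ S)),
              |g (cwM N σ) - g c| * cwB N x t σ :=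
          (Finset.sum_filter_add_sum_filter_not _ _ _).symm
      _ ≤ (η/2) * cwZ N x t + M * bad := by
          have h1 : (∑ σ ∈ Finset.univ.filter
              (fun σ : Fin N → ({-1,1} : Finset ℝ) => cwM N σ ∈ S),
              |g (cwM N σ) - g c| * cwB N x t σ) ≤ (η/2) * cwZ N x t := by
            calc (∑ σ ∈ Finset.univ.filter
                (fun σ : Fin N → ({-1,1} : Finset ℝ) => cwM N σ ∈ S),
                |g (cwM N σ) - g c| * cwB N x t σ)
                ≤ ∑ σ ∈ Finset.univ.filter
                    (fun σ : Fin N → ({-1,1} : Finset ℝ) => cwM N σ ∈ S),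
                    (η/2) * cwB N x t σ := by
                  refine Finset.sum_le_sum fun σ hσ => ?_
                  rw [Finset.mem_filter] at hσ
                  exact mul_le_mul_of_nonneg_right
                    (hSgood _ (cwM_mem N σ) hσ.2).le (hBpos σ).le
              _ ≤ ∑ σ : Fin N → ({-1,1} : Finset ℝ), (η/2) * cwB N x t σ := by
                  refine Finset.sum_le_sum_of_subset_of_nonneg (Finset.filter_subset _ _)
                    fun σ _ _ => ?_
                  exact mul_nonneg (by linarith) (hBpos σ).le
              _ = (η/2) * cwZ N x t := by rw [cwZ, ← Finset.mul_sum]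
          have h2 : (∑ σ ∈ Finset.univ.filter
              (fun σ : Fin N → ({-1,1} : Finset ℝ) => ¬ (cwM N σ ∈ S)),
              |g (cwM N σ) - g c| * cwB N x t σ) ≤ M * bad := by
            rw [hbad, Finset.mul_sum]
            refine Finset.sum_le_sum fun σ hσ => ?_
            exact mul_le_mul_of_nonneg_right (hMbound _ (cwM_mem N σ)) (hBpos σ).le
          linarith
  calc |(∑ σ : Fin N → ({-1,1} : Finset ℝ), (g (cwM N σ) - g c) * cwB N x t σ) / cwZ N x t|
      = |∑ σ : Fin N → ({-1,1} : Finset ℝ), (g (cwM N σ) - g c) * cwB N x t σ| / cwZ N x t := by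
        rw [abs_div, abs_of_pos hZpos]
    _ ≤ ((η/2) * cwZ N x t + M * bad) / cwZ N x t := by
        exact div_le_div_of_nonneg_right habs hZpos.le
    _ = η/2 + M * (bad / cwZ N x t) := by
        rw [add_div, mul_div_cancel_right₀ _ hZpos.ne', mul_div_assoc]
    _ < η/2 + M * (η/(2*M)) := by
        have := (mul_lt_mul_iff_right₀ hMpos).mpr hratioN
        linarith
    _ = η := by
        have hMne : M ≠ 0 := hMpos.ne'
        field_simp
        ring

end CW

namespace CW

lemma flip_sum (N : ℕ) (x t : ℝ) (u : ℝ → ℝ) :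
    ∑ k ∈ Finset.range (N+1), (N.choose k : ℝ) * (u (mu N k) * W x t N k)
      = ∑ k ∈ Finset.range (N+1), (N.choose k : ℝ) * (u (- mu N k) * W (-x) t N k) := by
  rw [← Finset.sum_range_reflect (fun k => (N.choose k : ℝ) * (u (- mu N k) * W (-x) t N k))
    (N+1)]
  refine Finset.sum_congr rfl fun j hj => ?_
  rw [Finset.mem_range] at hj
  have hjN : j ≤ N := by omega
  have hidx : N + 1 - 1 - j = N - j := by omega
  rw [hidx]
  have hmu : mu N (N - j) = - mu N j := by
    unfold mu
    rcases Nat.eq_zero_or_pos N with rfl | hN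
    · simp
    have hNne : (N:ℝ) ≠ 0 := by positivity
    rw [← neg_div, Nat.cast_sub hjN]
    congr 1
    ring
  have hch : (N.choose (N - j) : ℝ) = (N.choose j : ℝ) := by
    rw [Nat.choose_symm hjN]
  have hW : W (-x) t N (N - j) = W x t N j := by
    unfold W
    rw [hmu]
    congr 1
    ring
  rw [hch, hmu, hW, neg_neg]

lemma gibbs_flip (N : ℕ) (x t : ℝ) (g : ℝ → ℝ) :
    cwGibbs N x t (fun σ => g (cwM N σ)) = cwGibbs N (-x) t (fun σ => g (- cwM N σ)) := by
  rw [cwGibbs, cwGibbs]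
  have hnum : ∑ σ : Fin N → ({-1, 1} : Finset ℝ), g (cwM N σ) * cwB N x t σ
      = ∑ σ : Fin N → ({-1, 1} : Finset ℝ), g (- cwM N σ) * cwB N (-x) t σ := by
    rw [sum_spin_B N x t g, sum_spin_B N (-x) t (fun m => g (-m)), flip_sum N x t g]
  have hden : cwZ N x t = cwZ N (-x) t := by
    rw [cwZ_eq, cwZ_eq]
    have := flip_sum N x t (fun _ => 1)
    simpa using this
  rw [hnum, hden]

lemma gibbs_neg (N : ℕ) (x t : ℝ) (f : (Fin N → ({-1, 1} : Finset ℝ)) → ℝ) :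
    cwGibbs N x t (fun σ => - f σ) = - cwGibbs N x t f := by
  rw [cwGibbs, cwGibbs, ← neg_div]
  congr 1
  rw [← Finset.sum_neg_distrib]
  exact Finset.sum_congr rfl fun σ _ => by ring

lemma gibbs_odd_zero (N : ℕ) (t : ℝ) (g : ℝ → ℝ) (hodd : ∀ m, g (-m) = - g m) :
    cwGibbs N 0 t (fun σ => g (cwM N σ)) = 0 := by
  have h := gibbs_flip N 0 t g
  rw [neg_zero] at h
  have h2 : (fun σ : Fin N → ({-1, 1} : Finset ℝ) => g (- cwM N σ))
      = (fun σ => - g (cwM N σ)) := funext fun σ => hodd _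
  rw [h2, gibbs_neg] at h
  linarith

lemma rel1_nonneg (x t : ℝ) (hx : 0 ≤ x) (ht : 0 ≤ t) :
    Tendsto (fun N : ℕ =>
        cwGibbs N x t (fun σ => (cwM N σ) ^ 4)
          - (cwGibbs N x t (fun σ => (cwM N σ) ^ 2)) ^ 2)
      atTop (𝓝 0) := by
  obtain ⟨c, hmom⟩ := moment_tendsto x t hx ht
  have h4 := hmom (fun m => m^4) (continuous_pow 4) (Or.inl (fun m => by ring))
  have h2 := hmom (fun m => m^2) (continuous_pow 2) (Or.inl (fun m => by ring))
  have := h4.sub (h2.pow 2)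
  have hzero : c^4 - (c^2)^2 = 0 := by ring
  rw [hzero] at this
  exact this

lemma rel2_nonneg (x t : ℝ) (hx : 0 ≤ x) (ht : 0 ≤ t) :
    Tendsto (fun N : ℕ =>
        cwGibbs N x t (fun σ => (cwM N σ) ^ 3)
          - 3 * cwGibbs N x t (cwM N) * cwGibbs N x t (fun σ => (cwM N σ) ^ 2)
          + 2 * (cwGibbs N x t (cwM N)) ^ 3)
      atTop (𝓝 0) := by
  rcases eq_or_lt_of_le hx with hx0 | hxpos
  · -- x = 0 : odd moments vanish identically
    have hx0' : x = 0 := hx0.symm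
    subst hx0'
    have hzero : ∀ N : ℕ,
        cwGibbs N 0 t (fun σ => (cwM N σ) ^ 3)
          - 3 * cwGibbs N 0 t (cwM N) * cwGibbs N 0 t (fun σ => (cwM N σ) ^ 2)
          + 2 * (cwGibbs N 0 t (cwM N)) ^ 3 = 0 := by
      intro N
      have h3 : cwGibbs N 0 t (fun σ => (cwM N σ) ^ 3) = 0 :=
        gibbs_odd_zero N t (fun m => m^3) (fun m => by ring)
      have h1 : cwGibbs N 0 t (cwM N) = 0 := by
        have := gibbs_odd_zero N t (fun m => m) (fun m => by ring)
        simpa using this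
      rw [h3, h1]
      ring
    have : (fun N : ℕ =>
        cwGibbs N 0 t (fun σ => (cwM N σ) ^ 3)
          - 3 * cwGibbs N 0 t (cwM N) * cwGibbs N 0 t (fun σ => (cwM N σ) ^ 2)
          + 2 * (cwGibbs N 0 t (cwM N)) ^ 3) = fun _ => (0:ℝ) := funext hzero
    rw [this]
    exact tendsto_const_nhds
  · obtain ⟨c, hmom⟩ := moment_tendsto x t hx ht
    have h3 := hmom (fun m => m^3) (continuous_pow 3) (Or.inr hxpos)
    have h1 := hmom (fun m => m) continuous_id' (Or.inr hxpos)
    have h2 := hmom (fun m => m^2) (continuous_pow 2) (Or.inr hxpos)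
    have hcomb := (h3.sub (((h1.const_mul 3).mul h2))).add ((h1.pow 3).const_mul 2)
    have hzero : c^3 - 3 * c * c^2 + 2 * c^3 = 0 := by ring
    have : (3 : ℝ) * c * c ^ 2 = 3 * c * c^2 := rfl
    rw [show c ^ 3 - 3 * c * c ^ 2 + 2 * c ^ 3 = 0 from by ring] at hcomb
    exact hcomb

end CW


/-- **Conservation laws for the Curie–Weiss model.**  For every `x ∈ ℝ` and `t ≥ 0`,
`⟨m_N⁴⟩ - ⟨m_N²⟩² → 0` and `⟨m_N³⟩ - 3⟨m_N⟩⟨m_N²⟩ + 2⟨m_N⟩³ → 0` as `N → ∞`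
(the Ghirlanda–Guerra and first Aizenman–Contucci relations for the Curie–Weiss
model). -/
theorem cw_conservation_laws (x t : ℝ) (ht : 0 ≤ t) :
    Tendsto (fun N : ℕ =>
        cwGibbs N x t (fun σ => (cwM N σ) ^ 4)
          - (cwGibbs N x t (fun σ => (cwM N σ) ^ 2)) ^ 2)
      atTop (𝓝 0) ∧
    Tendsto (fun N : ℕ =>
        cwGibbs N x t (fun σ => (cwM N σ) ^ 3)
          - 3 * cwGibbs N x t (cwM N) * cwGibbs N x t (fun σ => (cwM N σ) ^ 2)
          + 2 * (cwGibbs N x t (cwM N)) ^ 3)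
      atTop (𝓝 0) := by
  rcases le_or_gt 0 x with hx | hx
  · exact ⟨CW.rel1_nonneg x t hx ht, CW.rel2_nonneg x t hx ht⟩
  · -- x < 0 : use the spin-flip symmetry
    have hx' : 0 ≤ -x := by linarith
    have e4 : ∀ N : ℕ, cwGibbs N x t (fun σ => (cwM N σ) ^ 4)
        = cwGibbs N (-x) t (fun σ => (cwM N σ) ^ 4) := by
      intro N
      have h := CW.gibbs_flip N x t (fun m => m ^ 4)
      have h2 : (fun σ : Fin N → ({-1, 1} : Finset ℝ) => (- cwM N σ) ^ 4)
          = fun σ => (cwM N σ) ^ 4 := funext fun σ => by ring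
      rw [h2] at h
      exact h
    have e2 : ∀ N : ℕ, cwGibbs N x t (fun σ => (cwM N σ) ^ 2)
        = cwGibbs N (-x) t (fun σ => (cwM N σ) ^ 2) := by
      intro N
      have h := CW.gibbs_flip N x t (fun m => m ^ 2)
      have h2 : (fun σ : Fin N → ({-1, 1} : Finset ℝ) => (- cwM N σ) ^ 2)
          = fun σ => (cwM N σ) ^ 2 := funext fun σ => by ring
      rw [h2] at h
      exact h
    have e3 : ∀ N : ℕ, cwGibbs N x t (fun σ => (cwM N σ) ^ 3)
        = - cwGibbs N (-x) t (fun σ => (cwM N σ) ^ 3) := by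
      intro N
      have h := CW.gibbs_flip N x t (fun m => m ^ 3)
      have h2 : (fun σ : Fin N → ({-1, 1} : Finset ℝ) => (- cwM N σ) ^ 3)
          = fun σ => - (cwM N σ) ^ 3 := funext fun σ => by ring
      rw [h2, CW.gibbs_neg] at h
      exact h
    have e1 : ∀ N : ℕ, cwGibbs N x t (cwM N)
        = - cwGibbs N (-x) t (cwM N) := by
      intro N
      have h := CW.gibbs_flip N x t (fun m => m)
      have h2 : (fun σ : Fin N → ({-1, 1} : Finset ℝ) => (- cwM N σ))
          = fun σ => - (cwM N σ) := rfl
      rw [h2, CW.gibbs_neg] at h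
      simpa using h
    constructor
    · have h := CW.rel1_nonneg (-x) t hx' ht
      have heq : (fun N : ℕ =>
          cwGibbs N x t (fun σ => (cwM N σ) ^ 4)
            - (cwGibbs N x t (fun σ => (cwM N σ) ^ 2)) ^ 2)
          = (fun N : ℕ =>
          cwGibbs N (-x) t (fun σ => (cwM N σ) ^ 4)
            - (cwGibbs N (-x) t (fun σ => (cwM N σ) ^ 2)) ^ 2) := by
        funext N
        rw [e4 N, e2 N]
      rw [heq]
      exact h
    · have h := CW.rel2_nonneg (-x) t hx' ht
      have heq : (fun N : ℕ =>
          cwGibbs N x t (fun σ => (cwM N σ) ^ 3)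
            - 3 * cwGibbs N x t (cwM N) * cwGibbs N x t (fun σ => (cwM N σ) ^ 2)
            + 2 * (cwGibbs N x t (cwM N)) ^ 3)
          = (fun N : ℕ => - (
          cwGibbs N (-x) t (fun σ => (cwM N σ) ^ 3)
            - 3 * cwGibbs N (-x) t (cwM N) * cwGibbs N (-x) t (fun σ => (cwM N σ) ^ 2)
            + 2 * (cwGibbs N (-x) t (cwM N)) ^ 3)) := by
        funext N
        rw [e3 N, e1 N, e2 N]
        ring
      rw [heq]
      have := h.neg
      simpa using this
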